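/- arXiv:2405.20986 — 2 statements merged into one kernel-verified Lean document; each statement's English description precedes it below -/
import Mathlib

section
/- Let p be a random probability vector on the C-simplex with distribution Dir(α), y a one-hot label, and γ ≥ 1. Then the expected focal loss E_{p~Dir(α)}[-Σ_c y_c (1-p_c)^γ log p_c] is bounded below by E_{p~Dir(α)}[-Σ_c y_c log p_c] - γ · E_{p~Dir(α)}[H(p)], where H(p) = -Σ_c p_c log p_c is the Shannon entropy of the categorical distribution p. -/
open MeasureTheory Real BigOperators

/-- The digamma function `ψ = (log ∘ Γ)'`. -/
noncomputable def digamma (x : ℝ) : ℝ := deriv (fun y => Real.log (Real.Gamma y)) x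

/-- The trigamma function `ψ₁ = ψ'`. -/
noncomputable def trigamma (x : ℝ) : ℝ := deriv digamma x

/-- The multivariate Beta function `B(α) = (∏ᵢ Γ(αᵢ)) / Γ(∑ᵢ αᵢ)`. -/
noncomputable def mvBeta {C : ℕ} (α : Fin C → ℝ) : ℝ :=
  (∏ i, Real.Gamma (α i)) / Real.Gamma (∑ i, α i)

/-- The Dirichlet density `D(p | α) = (1 / B(α)) ∏ᵢ pᵢ^(αᵢ - 1)`. -/
noncomputable def dirichletDensity {C : ℕ} (α p : Fin C → ℝ) : ℝ :=
  (∏ i, p i ^ (α i - 1)) / mvBeta α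

/-- Expectation `E_{p ~ Dir(α)}[g p]` for a Dirichlet distribution with `C + 1` categories,
written as an integral over the first `C` coordinates (the last coordinate being
`1 - ∑` of the others), against the Dirichlet density on the simplex. -/
noncomputable def dirichletExp {C : ℕ} (α : Fin (C + 1) → ℝ) (g : (Fin (C + 1) → ℝ) → ℝ) : ℝ :=
  ∫ x : Fin C → ℝ,
    Set.indicator {x : Fin C → ℝ | (∀ i, 0 ≤ x i) ∧ ∑ i, x i ≤ 1}
      (fun x =>
        dirichletDensity α (Fin.snoc x (1 - ∑ i, x i)) *
          g (Fin.snoc x (1 - ∑ i, x i))) x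

/-- Kullback–Leibler divergence `KL(Dir(α) ‖ Dir(α̂)) = E_{p ~ Dir(α)}[log (D(p|α)/D(p|α̂))]`. -/
noncomputable def dirichletKL {C : ℕ} (α αhat : Fin (C + 1) → ℝ) : ℝ :=
  dirichletExp α (fun p => Real.log (dirichletDensity α p / dirichletDensity αhat p))

/-- Differential entropy `H(Dir(α)) = E_{p ~ Dir(α)}[- log D(p|α)]`. -/
noncomputable def dirichletEntropy {C : ℕ} (α : Fin (C + 1) → ℝ) : ℝ :=
  dirichletExp α (fun p => - Real.log (dirichletDensity α p))

section Aux

lemma measurable_rpow_const (c : ℝ) : Measurable (fun t : ℝ => t ^ c) := by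
  have h : (fun t : ℝ => t ^ c) = fun t =>
      if t = 0 then (0:ℝ) ^ c
      else Real.exp (Real.log t * c) * (if t < 0 then Real.cos (c * Real.pi) else 1) := by
    funext t
    rcases lt_trichotomy t 0 with h | h | h
    · rw [if_neg h.ne, if_pos h, Real.rpow_def_of_neg h]
    · simp [h]
    · rw [if_neg h.ne', if_neg (not_lt.2 h.le), Real.rpow_def_of_pos h, mul_one]
  rw [h]
  refine Measurable.ite (measurableSet_eq_fun measurable_id measurable_const) measurable_const ?_
  refine ((Real.measurable_exp.comp (Real.measurable_log.mul_const c)).mul ?_)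
  exact Measurable.ite (measurableSet_lt measurable_id measurable_const) measurable_const
    measurable_const

variable {C : ℕ}

lemma measurable_snocCoord (i : Fin (C+1)) :
    Measurable (fun x : Fin C → ℝ => (Fin.snoc x (1 - ∑ j, x j) : Fin (C+1) → ℝ) i) := by
  induction i using Fin.lastCases with
  | last =>
      simp only [Fin.snoc_last]
      exact measurable_const.sub (Finset.measurable_sum _ fun j _ => measurable_pi_apply j)
  | cast i =>
      simp only [Fin.snoc_castSucc]
      exact measurable_pi_apply i

lemma measurableSet_simplex :
    MeasurableSet {x : Fin C → ℝ | (∀ i, 0 ≤ x i) ∧ ∑ i, x i ≤ 1} := by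
  have : {x : Fin C → ℝ | (∀ i, 0 ≤ x i) ∧ ∑ i, x i ≤ 1} =
      (⋂ i, {x : Fin C → ℝ | 0 ≤ x i}) ∩ {x : Fin C → ℝ | ∑ i, x i ≤ 1} := by
    ext x; simp [Set.mem_iInter]
  rw [this]
  refine MeasurableSet.inter (MeasurableSet.iInter fun i => ?_) ?_
  · exact measurableSet_le measurable_const (measurable_pi_apply i)
  · exact measurableSet_le (Finset.measurable_sum _ fun j _ => measurable_pi_apply j)
      measurable_const

lemma integrable_box (c : Fin C → ℝ) (hc : ∀ i, -1 < c i) :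
    Integrable (fun x : Fin C → ℝ =>
      ∏ i, (Set.Icc (0:ℝ) 1).indicator (fun t => t ^ c i) (x i)) := by
  refine Integrable.fintype_prod (f := fun i t => (Set.Icc (0:ℝ) 1).indicator
    (fun t => t ^ c i) t) (fun i => ?_)
  rw [integrable_indicator_iff measurableSet_Icc]
  rw [integrableOn_Icc_iff_integrableOn_Ioc]
  have h := intervalIntegrable_iff.1 (intervalIntegral.intervalIntegrable_rpow' (hc i)
    (a := 0) (b := 1))
  rwa [Set.uIoc_of_le zero_le_one] at h

lemma integrableOn_of_bound_box {A : Set (Fin C → ℝ)} (hA : MeasurableSet A)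
    {f : (Fin C → ℝ) → ℝ} (hf : Measurable f) (c : Fin C → ℝ) (hc : ∀ i, -1 < c i) (K : ℝ)
    (hbound : ∀ x ∈ A, ‖f x‖ ≤ K * ∏ i, (Set.Icc (0:ℝ) 1).indicator (fun t => t ^ c i) (x i)) :
    IntegrableOn f A volume := by
  refine Integrable.mono' (((integrable_box c hc).const_mul K).integrableOn)
    hf.aestronglyMeasurable ?_
  rw [ae_restrict_iff' hA]
  exact ae_of_all _ hbound

end Aux

variable {C : ℕ}

/-- The involution swapping coordinate `j` with the implicit last simplex coordinate. -/
noncomputable def Tmap (j : Fin C) : (Fin C → ℝ) → (Fin C → ℝ) :=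
  fun x => Function.update x j (1 - ∑ i, x i)

lemma Tmap_apply (j : Fin C) (x : Fin C → ℝ) (i : Fin C) :
    Tmap j x i = if i = j then 1 - ∑ k, x k else x i := by
  simp [Tmap, Function.update_apply]

lemma Tmap_sum (j : Fin C) (x : Fin C → ℝ) : ∑ i, Tmap j x i = 1 - x j := by
  classical
  rw [Tmap, Finset.sum_update_of_mem (Finset.mem_univ j)]
  have h : ∑ i ∈ Finset.univ \ {j}, x i = (∑ i, x i) - x j := by
    rw [Finset.sum_sdiff_eq_sub (Finset.subset_univ _), Finset.sum_singleton]
  rw [h]; ring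

lemma Tmap_invol (j : Fin C) : ∀ x, Tmap j (Tmap j x) = x := by
  intro x
  funext i
  rcases eq_or_ne i j with h | h
  · subst h
    rw [Tmap_apply, if_pos rfl, Tmap_sum]; ring
  · rw [Tmap_apply, if_neg h, Tmap_apply, if_neg h]

lemma Tmap_measurable (j : Fin C) : Measurable (Tmap j) := by
  refine measurable_pi_lambda _ fun i => ?_
  simp only [Tmap_apply]
  split_ifs
  · exact measurable_const.sub (Finset.measurable_sum _ fun k _ => measurable_pi_apply k)
  · exact measurable_pi_apply i

/-- `Tmap j` as a measurable equivalence. -/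
noncomputable def Tequiv (j : Fin C) : (Fin C → ℝ) ≃ᵐ (Fin C → ℝ) where
  toFun := Tmap j
  invFun := Tmap j
  left_inv := Tmap_invol j
  right_inv := Tmap_invol j
  measurable_toFun := Tmap_measurable j
  measurable_invFun := Tmap_measurable j

lemma Tmap_measurePreserving (j : Fin C) :
    MeasurePreserving (Tmap j) (volume : Measure (Fin C → ℝ)) volume := by
  classical
  set v : Fin C → ℝ := fun k => if k = j then -2 else -1 with hv
  set u : Fin C → ℝ := Pi.single j 1 with hu
  set M : Matrix (Fin C) (Fin C) ℝ := 1 + Matrix.replicateCol (Fin 1) u * Matrix.replicateRow (Fin 1) v with hMdef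
  have hdet : M.det = -1 := by
    rw [hMdef, show (1 + Matrix.replicateCol (Fin 1) u * Matrix.replicateRow (Fin 1) v : Matrix (Fin C) (Fin C) ℝ).det = 1 + dotProduct v u from
      Matrix.det_one_add_replicateCol_mul_replicateRow u v]
    have : dotProduct v u = -2 := by
      simp [dotProduct, hu, hv, Pi.single_apply, mul_ite]
    rw [this]; norm_num
  have hvx : ∀ x : Fin C → ℝ, ∑ k, v k * x k = -(∑ k, x k) - x j := by
    intro x
    have h1 : ∀ k, v k * x k = -(x k) - (if k = j then x k else 0) := by
      intro k
      rcases eq_or_ne k j with h | h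
      · subst h; simp [hv]; ring
      · simp [hv, h]
    simp only [h1, Finset.sum_sub_distrib, Finset.sum_neg_distrib]
    rw [Finset.sum_ite_eq' Finset.univ j (fun k => x k)]
    simp
  have hMfun : ⇑(Matrix.toLin' M) = fun x : Fin C → ℝ => fun i => x i + u i * (∑ k, v k * x k) := by
    funext x i
    rw [Matrix.toLin'_apply]
    simp only [hMdef, Matrix.add_mulVec, Matrix.one_mulVec, Pi.add_apply]
    congr 1
    simp only [Matrix.mulVec, dotProduct, Matrix.mul_apply, Matrix.replicateCol_apply,
      Matrix.replicateRow_apply, Fin.sum_univ_one, Finset.mul_sum]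
    exact Finset.sum_congr rfl fun k _ => by ring
  have hml : Measurable (Matrix.toLin' M) := by
    rw [hMfun]
    refine measurable_pi_lambda _ fun i => ?_
    exact (measurable_pi_apply i).add
      ((Finset.measurable_sum _ fun k _ => (by fun_prop : Measurable fun c : Fin C → ℝ => v k * c k)).const_mul
        (u i))
  have hmp : MeasurePreserving (Matrix.toLin' M) (volume : Measure (Fin C → ℝ)) volume := by
    refine ⟨hml, ?_⟩
    rw [Real.map_matrix_volume_pi_eq_smul_volume_pi (by rw [hdet]; norm_num), hdet]
    norm_num
  have hcomp : Tmap j = (fun y : Fin C → ℝ => Pi.single j 1 + y) ∘ (Matrix.toLin' M) := by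
    funext x i
    simp only [Function.comp_apply, Pi.add_apply, hMfun, hvx]
    rw [Tmap_apply]
    rcases eq_or_ne i j with h | h
    · subst h; simp [hu, Pi.single_apply]; ring
    · simp [hu, Pi.single_apply, h]
  rw [hcomp]
  exact (measurePreserving_add_left volume (Pi.single j 1)).comp hmp

variable {C : ℕ}

lemma integrableOn_prod_rpow (b : Fin (C+1) → ℝ) (hb1 : ∀ i, -1 < b i) (hb0 : ∀ i, b i ≤ 0) :
    IntegrableOn
      (fun x : Fin C → ℝ => ∏ i, ((Fin.snoc x (1 - ∑ k, x k) : Fin (C+1) → ℝ) i) ^ (b i))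
      {x : Fin C → ℝ | (∀ i, 0 ≤ x i) ∧ ∑ i, x i ≤ 1} volume := by
  classical
  set S : Set (Fin C → ℝ) := {x : Fin C → ℝ | (∀ i, 0 ≤ x i) ∧ ∑ i, x i ≤ 1} with hS
  set f : (Fin C → ℝ) → ℝ :=
    fun x => ∏ i, ((Fin.snoc x (1 - ∑ k, x k) : Fin (C+1) → ℝ) i) ^ (b i) with hf
  set ε : ℝ := ((C : ℝ) + 1)⁻¹ with hε
  have hεpos : 0 < ε := by positivity
  have hfm : Measurable f :=
    Finset.measurable_prod _ fun i _ =>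
      (measurable_rpow_const (b i)).comp (measurable_snocCoord i)
  -- covering
  have hcover : S ⊆ ⋃ j : Fin (C+1),
      (S ∩ {x : Fin C → ℝ | ε ≤ (Fin.snoc x (1 - ∑ k, x k) : Fin (C+1) → ℝ) j}) := by
    intro x hx
    have hsum : ∑ j, (Fin.snoc x (1 - ∑ k, x k) : Fin (C+1) → ℝ) j = 1 := by
      rw [Fin.sum_univ_castSucc]
      simp only [Fin.snoc_castSucc, Fin.snoc_last]
      ring
    by_contra hmem
    simp only [Set.mem_iUnion, Set.mem_inter_iff, Set.mem_setOf_eq, not_exists, not_and,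
      not_le] at hmem
    have hlt : ∀ j, (Fin.snoc x (1 - ∑ k, x k) : Fin (C+1) → ℝ) j < ε := fun j => hmem j hx
    have h2 : (1:ℝ) < ∑ j : Fin (C+1), ε := by
      rw [← hsum]
      exact Finset.sum_lt_sum_of_nonempty Finset.univ_nonempty fun j _ => hlt j
    rw [Finset.sum_const, Finset.card_univ, Fintype.card_fin, nsmul_eq_mul] at h2
    have : ((C:ℝ) + 1) * ε = 1 := by
      rw [hε]; field_simp
    push_cast at h2
    linarith
  refine IntegrableOn.mono_set (integrableOn_finite_iUnion.2 fun j => ?_) hcover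
  -- facts about membership
  induction j using Fin.lastCases with
  | last =>
      refine integrableOn_of_bound_box
        (measurableSet_simplex.inter
          (measurableSet_le measurable_const (measurable_snocCoord _))) hfm
        (fun i => b i.castSucc) (fun i => hb1 _) (ε ^ (b (Fin.last C))) ?_
      rintro x ⟨⟨hx0, hx1⟩, hxε⟩
      simp only [Set.mem_setOf_eq, Fin.snoc_last] at hxε
      have hxi1 : ∀ i, x i ≤ 1 := fun i =>
        le_trans (Finset.single_le_sum (fun k _ => hx0 k) (Finset.mem_univ i)) hx1
      have hfx : f x = (∏ i : Fin C, (x i) ^ (b i.castSucc)) * (1 - ∑ k, x k) ^ b (Fin.last C) := by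
        show (∏ i : Fin (C+1), ((Fin.snoc x (1 - ∑ k, x k) : Fin (C+1) → ℝ) i) ^ (b i)) = _
        rw [Fin.prod_univ_castSucc]
        simp only [Fin.snoc_castSucc, Fin.snoc_last]
      have hprod_nonneg : 0 ≤ ∏ i : Fin C, (x i) ^ (b i.castSucc) :=
        Finset.prod_nonneg fun i _ => Real.rpow_nonneg (hx0 i) _
      have hfxnn : 0 ≤ f x := by
        rw [hfx]
        exact mul_nonneg hprod_nonneg (Real.rpow_nonneg (by linarith [hxε, hεpos]) _)
      rw [Real.norm_eq_abs, abs_of_nonneg hfxnn, hfx, mul_comm]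
      beta_reduce
      rw [show (∏ i : Fin C, (Set.Icc (0:ℝ) 1).indicator (fun t => t ^ b i.castSucc) (x i))
          = ∏ i : Fin C, (x i) ^ (b i.castSucc) from Finset.prod_congr rfl fun i _ =>
            Set.indicator_of_mem (Set.mem_Icc.2 ⟨hx0 i, hxi1 i⟩) _]
      refine mul_le_mul (Real.rpow_le_rpow_of_nonpos hεpos hxε (hb0 _)) le_rfl
        hprod_nonneg (Real.rpow_nonneg hεpos.le _)
  | cast j =>
      rw [← (Tmap_measurePreserving j).integrableOn_comp_preimage
        (Tequiv j).measurableEmbedding]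
      set c : Fin C → ℝ := Function.update (fun i => b i.castSucc) j (b (Fin.last C)) with hc
      have hc1 : ∀ i, -1 < c i := by
        intro i
        rcases eq_or_ne i j with h | h
        · subst h; rw [hc, Function.update_self]; exact hb1 _
        · rw [hc, Function.update_of_ne h]; exact hb1 _
      refine integrableOn_of_bound_box
        ((Tmap_measurable j)
          (measurableSet_simplex.inter
            (measurableSet_le measurable_const (measurable_snocCoord _))))
        (hfm.comp (Tmap_measurable j)) c hc1 (ε ^ (b j.castSucc)) ?_
      intro x hx
      have hTx : Tmap j x ∈ S ∧ ε ≤ (Fin.snoc (Tmap j x)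
          (1 - ∑ k, Tmap j x k) : Fin (C+1) → ℝ) j.castSucc := hx
      obtain ⟨⟨hT0, hT1⟩, hTε⟩ := hTx
      simp only [Fin.snoc_castSucc] at hTε
      rw [Tmap_apply, if_pos rfl] at hTε
      -- basic facts about x
      have hsT : ∑ i, Tmap j x i = 1 - x j := Tmap_sum j x
      have hxj0 : 0 ≤ x j := by
        have := hT1; rw [hsT] at this; linarith
      have hTnonneg : 0 ≤ ∑ i, Tmap j x i := Finset.sum_nonneg fun i _ => hT0 i
      have hxj1 : x j ≤ 1 := by rw [hsT] at hTnonneg; linarith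
      have hxi0 : ∀ i, 0 ≤ x i := by
        intro i
        rcases eq_or_ne i j with h | h
        · subst h; exact hxj0
        · have := hT0 i; rwa [Tmap_apply, if_neg h] at this
      have hxi1 : ∀ i, x i ≤ 1 := by
        intro i
        rcases eq_or_ne i j with h | h
        · subst h; exact hxj1
        · have h2 := le_trans (Finset.single_le_sum (fun k _ => hT0 k) (Finset.mem_univ i)) hT1
          rwa [Tmap_apply, if_neg h] at h2
      -- value of f ∘ Tmap j
      have hfT : f (Tmap j x) =
          (1 - ∑ k, x k) ^ (b j.castSucc) * ∏ i : Fin C, (x i) ^ (c i) := by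
        show (∏ i : Fin (C+1), ((Fin.snoc (Tmap j x) (1 - ∑ k, Tmap j x k) : Fin (C+1) → ℝ) i)
            ^ (b i)) = _
        rw [Fin.prod_univ_castSucc]
        simp only [Fin.snoc_castSucc, Fin.snoc_last]
        rw [hsT]
        have h1 : (fun i : Fin C => (Tmap j x i) ^ (b i.castSucc)) =
            Function.update (fun i : Fin C => (x i) ^ (b i.castSucc)) j
              ((1 - ∑ k, x k) ^ (b j.castSucc)) := by
          funext i
          rcases eq_or_ne i j with h | h
          · subst h; rw [Function.update_self, Tmap_apply, if_pos rfl]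
          · rw [Function.update_of_ne h, Tmap_apply, if_neg h]
        have h2 : (fun i : Fin C => (x i) ^ (c i)) =
            Function.update (fun i : Fin C => (x i) ^ (b i.castSucc)) j
              ((x j) ^ (b (Fin.last C))) := by
          funext i
          rcases eq_or_ne i j with h | h
          · subst h; rw [Function.update_self, hc, Function.update_self]
          · rw [Function.update_of_ne h, hc, Function.update_of_ne h]
        rw [h1, h2, Finset.prod_update_of_mem (Finset.mem_univ j),
          Finset.prod_update_of_mem (Finset.mem_univ j), show (1 - (1 - x j)) = x j by ring]
        ring
      have hprod_nonneg : 0 ≤ ∏ i : Fin C, (x i) ^ (c i) :=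
        Finset.prod_nonneg fun i _ => Real.rpow_nonneg (hxi0 i) _
      have hfTnn : 0 ≤ f (Tmap j x) := by
        rw [hfT]
        exact mul_nonneg (Real.rpow_nonneg (by linarith) _) hprod_nonneg
      rw [Function.comp_apply, Real.norm_eq_abs, abs_of_nonneg hfTnn, hfT]
      rw [show (∏ i : Fin C, (Set.Icc (0:ℝ) 1).indicator (fun t => t ^ c i) (x i))
          = ∏ i : Fin C, (x i) ^ (c i) from Finset.prod_congr rfl fun i _ =>
            Set.indicator_of_mem (Set.mem_Icc.2 ⟨hxi0 i, hxi1 i⟩) _]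
      exact mul_le_mul (Real.rpow_le_rpow_of_nonpos hεpos hTε (hb0 _)) le_rfl
        hprod_nonneg (Real.rpow_nonneg hεpos.le _)

/-- The Dirichlet density (as a function of the first `C` coordinates) is integrable on the
simplex. -/
lemma integrableOn_dirichletDensity (α : Fin (C+1) → ℝ) (hα : ∀ i, 0 < α i) :
    IntegrableOn
      (fun x : Fin C → ℝ => dirichletDensity α (Fin.snoc x (1 - ∑ k, x k)))
      {x : Fin C → ℝ | (∀ i, 0 ≤ x i) ∧ ∑ i, x i ≤ 1} volume := by
  classical
  set S : Set (Fin C → ℝ) := {x : Fin C → ℝ | (∀ i, 0 ≤ x i) ∧ ∑ i, x i ≤ 1} with hS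
  set b : Fin (C+1) → ℝ := fun i => min (α i) 1 - 1 with hb
  have hb1 : ∀ i, -1 < b i := fun i => by
    have h := lt_min (hα i) one_pos
    simp only [hb]; linarith
  have hb0 : ∀ i, b i ≤ 0 := fun i => by
    simp only [hb]; linarith [min_le_right (α i) 1]
  have hnum : IntegrableOn
      (fun x : Fin C → ℝ => ∏ i, ((Fin.snoc x (1 - ∑ k, x k) : Fin (C+1) → ℝ) i) ^ (α i - 1))
      S volume := by
    refine Integrable.mono' (integrableOn_prod_rpow b hb1 hb0)
      (Finset.measurable_prod _ fun i _ =>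
        (measurable_rpow_const (α i - 1)).comp (measurable_snocCoord i)).aestronglyMeasurable ?_
    rw [ae_restrict_iff' measurableSet_simplex]
    refine ae_of_all _ fun x hx => ?_
    obtain ⟨hx0, hx1⟩ := hx
    set p : Fin (C+1) → ℝ := Fin.snoc x (1 - ∑ k, x k) with hp
    have hp0 : ∀ i, 0 ≤ p i := by
      intro i
      induction i using Fin.lastCases with
      | last => simp only [hp, Fin.snoc_last]; linarith
      | cast i => simp only [hp, Fin.snoc_castSucc]; exact hx0 i
    have hp1 : ∀ i, p i ≤ 1 := by
      intro i
      induction i using Fin.lastCases with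
      | last =>
          simp only [hp, Fin.snoc_last]
          have : 0 ≤ ∑ k, x k := Finset.sum_nonneg fun k _ => hx0 k
          linarith
      | cast i =>
          simp only [hp, Fin.snoc_castSucc]
          exact le_trans (Finset.single_le_sum (fun k _ => hx0 k) (Finset.mem_univ i)) hx1
    have hterm : ∀ i, (p i) ^ (α i - 1) ≤ (p i) ^ (b i) := by
      intro i
      rcases eq_or_lt_of_le (hp0 i) with h | h
      · rcases le_or_gt 1 (α i) with h1 | h1
        · have hbeq : b i = 0 := by simp [hb, min_eq_right h1]
          rw [hbeq, Real.rpow_zero, ← h]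
          exact Real.rpow_le_one le_rfl zero_le_one (by linarith)
        · have hbeq : b i = α i - 1 := by simp [hb, min_eq_left h1.le]
          rw [hbeq]
      · refine Real.rpow_le_rpow_of_exponent_ge h (hp1 i) ?_
        have h2 := min_le_left (α i) 1
        simp only [hb]; linarith
    have hnn : 0 ≤ ∏ i, (p i) ^ (α i - 1) :=
      Finset.prod_nonneg fun i _ => Real.rpow_nonneg (hp0 i) _
    rw [Real.norm_eq_abs, abs_of_nonneg hnn]
    exact Finset.prod_le_prod (fun i _ => Real.rpow_nonneg (hp0 i) _) fun i _ => hterm i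
  have : (fun x : Fin C → ℝ => dirichletDensity α (Fin.snoc x (1 - ∑ k, x k))) =
      fun x => (∏ i, ((Fin.snoc x (1 - ∑ k, x k) : Fin (C+1) → ℝ) i) ^ (α i - 1)) *
        (mvBeta α)⁻¹ := by
    funext x; rw [dirichletDensity, div_eq_mul_inv]
  rw [this]
  exact hnum.mul_const _

/-- Pointwise key inequality coming from Bernoulli's inequality. -/
lemma key_ineq {q γ s : ℝ} (h0 : 0 ≤ q) (h1 : q ≤ 1) (hγ : 1 ≤ γ)
    (hs : -(q * Real.log q) ≤ s) :
    -Real.log q ≤ -((1 - q) ^ γ * Real.log q) + γ * s := by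
  have hlog : Real.log q ≤ 0 := by
    rcases eq_or_lt_of_le h0 with h | h
    · simp [← h]
    · exact Real.log_nonpos h.le h1
  have hB : 1 - γ * q ≤ (1 - q) ^ γ := by
    have h := one_add_mul_self_le_rpow_one_add (s := -q) (by linarith) hγ
    have e1 : (1 : ℝ) + γ * (-q) = 1 - γ * q := by ring
    have e2 : (1 : ℝ) + (-q) = 1 - q := by ring
    rwa [e1, e2] at h
  nlinarith [mul_le_mul_of_nonneg_right hB (neg_nonneg.2 hlog),
    mul_nonneg (by linarith : (0:ℝ) ≤ γ) (by linarith : 0 ≤ s + q * Real.log q)]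

lemma neg_mul_log_le_one {q : ℝ} (h0 : 0 ≤ q) (h1 : q ≤ 1) : -(q * Real.log q) ≤ 1 := by
  rcases eq_or_lt_of_le h0 with h | h
  · simp [← h]
  · have := Real.one_sub_inv_le_log_of_pos h
    have hq : q * q⁻¹ = 1 := mul_inv_cancel₀ h.ne'
    nlinarith

lemma neg_mul_log_nonneg {q : ℝ} (h0 : 0 ≤ q) (h1 : q ≤ 1) : 0 ≤ -(q * Real.log q) := by
  rcases eq_or_lt_of_le h0 with h | h
  · simp [← h]
  · have := Real.log_nonpos h.le h1
    nlinarith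
/-- For `γ ≥ 1` and a one-hot label `y`, the expected focal loss under `Dir(α)` is bounded
below by the expected cross-entropy minus `γ` times the expected Shannon entropy of `p`. -/
theorem expected_focal_loss_lower_bound
    (C : ℕ) (α : Fin (C + 1) → ℝ) (hα : ∀ i, 0 < α i)
    (cstar : Fin (C + 1)) (y : Fin (C + 1) → ℝ)
    (hy : y = fun c => if c = cstar then 1 else 0)
    (γ : ℝ) (hγ : 1 ≤ γ) :
    dirichletExp α (fun p => -∑ c, y c * (1 - p c) ^ γ * Real.log (p c)) ≥
      dirichletExp α (fun p => -∑ c, y c * Real.log (p c)) -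
        γ * dirichletExp α (fun p => -∑ c, p c * Real.log (p c)) := by
  classical
  subst hy
  have hg1 : (fun p : Fin (C+1) → ℝ =>
      -∑ c, (if c = cstar then (1:ℝ) else 0) * (1 - p c) ^ γ * Real.log (p c)) =
      fun p => -((1 - p cstar) ^ γ * Real.log (p cstar)) := by
    funext p
    congr 1
    rw [Finset.sum_eq_single cstar (fun c _ hc => by simp [hc])
      (fun h => absurd (Finset.mem_univ _) h)]
    simp
  have hg2 : (fun p : Fin (C+1) → ℝ =>
      -∑ c, (if c = cstar then (1:ℝ) else 0) * Real.log (p c)) =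
      fun p => -Real.log (p cstar) := by
    funext p
    congr 1
    rw [Finset.sum_eq_single cstar (fun c _ hc => by simp [hc])
      (fun h => absurd (Finset.mem_univ _) h)]
    simp
  rw [hg1, hg2]
  set S : Set (Fin C → ℝ) := {x : Fin C → ℝ | (∀ i, 0 ≤ x i) ∧ ∑ i, x i ≤ 1} with hS
  set P : (Fin C → ℝ) → Fin (C+1) → ℝ := fun x => Fin.snoc x (1 - ∑ i, x i) with hP
  set dens : (Fin C → ℝ) → ℝ := fun x => dirichletDensity α (P x) with hdens
  set F : (Fin C → ℝ) → ℝ :=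
    S.indicator (fun x => dens x * (-((1 - P x cstar) ^ γ * Real.log (P x cstar)))) with hF
  set G : (Fin C → ℝ) → ℝ :=
    S.indicator (fun x => dens x * (-Real.log (P x cstar))) with hG
  set H : (Fin C → ℝ) → ℝ :=
    S.indicator (fun x => dens x * (-∑ c, P x c * Real.log (P x c))) with hH
  show (∫ x, F x) ≥ (∫ x, G x) - γ * ∫ x, H x
  -- membership facts
  have hmem : ∀ x ∈ S, (∀ i, 0 ≤ P x i) ∧ (∀ i, P x i ≤ 1) := by
    rintro x ⟨hx0, hx1⟩
    constructor
    · intro i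
      induction i using Fin.lastCases with
      | last => simp only [hP, Fin.snoc_last]; linarith
      | cast i => simp only [hP, Fin.snoc_castSucc]; exact hx0 i
    · intro i
      induction i using Fin.lastCases with
      | last =>
          simp only [hP, Fin.snoc_last]
          have : 0 ≤ ∑ k, x k := Finset.sum_nonneg fun k _ => hx0 k
          linarith
      | cast i =>
          simp only [hP, Fin.snoc_castSucc]
          exact le_trans (Finset.single_le_sum (fun k _ => hx0 k) (Finset.mem_univ i)) hx1
  have hBeta : 0 < mvBeta α :=
    div_pos (Finset.prod_pos fun i _ => Real.Gamma_pos_of_pos (hα i))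
      (Real.Gamma_pos_of_pos (Finset.sum_pos (fun i _ => hα i) Finset.univ_nonempty))
  have hdnn : ∀ x ∈ S, 0 ≤ dens x := by
    intro x hx
    exact div_nonneg
      (Finset.prod_nonneg fun i _ => Real.rpow_nonneg ((hmem x hx).1 i) _) hBeta.le
  -- entropy facts
  have hentrw : ∀ x : Fin C → ℝ,
      (-∑ c, P x c * Real.log (P x c)) = ∑ c, -(P x c * Real.log (P x c)) := by
    intro x; rw [← Finset.sum_neg_distrib]
  have hent0 : ∀ x ∈ S, 0 ≤ -∑ c, P x c * Real.log (P x c) := by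
    intro x hx
    rw [hentrw]
    exact Finset.sum_nonneg fun c _ => neg_mul_log_nonneg ((hmem x hx).1 c) ((hmem x hx).2 c)
  have hentq : ∀ x ∈ S,
      -(P x cstar * Real.log (P x cstar)) ≤ -∑ c, P x c * Real.log (P x c) := by
    intro x hx
    rw [hentrw]
    exact Finset.single_le_sum
      (fun c _ => neg_mul_log_nonneg ((hmem x hx).1 c) ((hmem x hx).2 c))
      (Finset.mem_univ cstar)
  have hent1 : ∀ x ∈ S, (-∑ c, P x c * Real.log (P x c)) ≤ (C : ℝ) + 1 := by
    intro x hx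
    rw [hentrw]
    have h := Finset.sum_le_card_nsmul Finset.univ
      (fun c => -(P x c * Real.log (P x c))) 1
      (fun c _ => neg_mul_log_le_one ((hmem x hx).1 c) ((hmem x hx).2 c))
    rw [Finset.card_univ, Fintype.card_fin, nsmul_eq_mul, mul_one] at h
    push_cast at h
    linarith
  -- log facts
  have hlogq : ∀ x ∈ S, Real.log (P x cstar) ≤ 0 := by
    intro x hx
    rcases eq_or_lt_of_le ((hmem x hx).1 cstar) with h | h
    · simp [← h]
    · exact Real.log_nonpos h.le ((hmem x hx).2 cstar)
  have hpow01 : ∀ x ∈ S, 0 ≤ (1 - P x cstar) ^ γ ∧ (1 - P x cstar) ^ γ ≤ 1 := by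
    intro x hx
    constructor
    · exact Real.rpow_nonneg (by linarith [(hmem x hx).2 cstar]) _
    · exact Real.rpow_le_one (by linarith [(hmem x hx).2 cstar])
        (by linarith [(hmem x hx).1 cstar]) (by linarith)
  -- measurability
  have hdens_meas : Measurable dens := by
    have : dens = fun x => (∏ i, (P x i) ^ (α i - 1)) / mvBeta α := rfl
    rw [this]
    exact (Finset.measurable_prod _ fun i _ =>
      (measurable_rpow_const (α i - 1)).comp (measurable_snocCoord i)).div_const _
  have hq_meas : Measurable (fun x : Fin C → ℝ => P x cstar) := measurable_snocCoord cstar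
  have hFmeas : Measurable F :=
    (hdens_meas.mul (((measurable_rpow_const γ).comp
      (measurable_const.sub hq_meas)).mul
      (Real.measurable_log.comp hq_meas)).neg).indicator measurableSet_simplex
  have hGmeas : Measurable G :=
    (hdens_meas.mul (Real.measurable_log.comp hq_meas).neg).indicator measurableSet_simplex
  have hHmeas : Measurable H :=
    (hdens_meas.mul (Finset.measurable_sum _ fun c _ =>
      (measurable_snocCoord c).mul
        (Real.measurable_log.comp (measurable_snocCoord c))).neg).indicator
      measurableSet_simplex
  -- nonnegativity
  have hFnn : ∀ x, 0 ≤ F x := by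
    intro x
    refine Set.indicator_nonneg (fun x hx => mul_nonneg (hdnn x hx) ?_) x
    have h1 := (hpow01 x hx).1
    have h2 := hlogq x hx
    nlinarith
  have hGnn : ∀ x, 0 ≤ G x := by
    intro x
    refine Set.indicator_nonneg (fun x hx => mul_nonneg (hdnn x hx) ?_) x
    linarith [hlogq x hx]
  have hHnn : ∀ x, 0 ≤ H x := by
    intro x
    exact Set.indicator_nonneg (fun x hx => mul_nonneg (hdnn x hx) (hent0 x hx)) x
  -- pointwise comparisons
  have hFG : ∀ x, F x ≤ G x := by
    intro x
    by_cases hx : x ∈ S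
    · rw [hF, hG, Set.indicator_of_mem hx, Set.indicator_of_mem hx]
      refine mul_le_mul_of_nonneg_left ?_ (hdnn x hx)
      have h1 := (hpow01 x hx).1
      have h2 := (hpow01 x hx).2
      have h3 := hlogq x hx
      nlinarith
    · rw [hF, hG, Set.indicator_of_notMem hx, Set.indicator_of_notMem hx]
  have hGFH : ∀ x, G x ≤ F x + γ * H x := by
    intro x
    by_cases hx : x ∈ S
    · rw [hF, hG, hH, Set.indicator_of_mem hx, Set.indicator_of_mem hx,
        Set.indicator_of_mem hx]
      have hkey := key_ineq ((hmem x hx).1 cstar) ((hmem x hx).2 cstar) hγ (hentq x hx)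
      have h2 := mul_le_mul_of_nonneg_left hkey (hdnn x hx)
      have h3 : dens x * (-((1 - P x cstar) ^ γ * Real.log (P x cstar)) +
          γ * (-∑ c, P x c * Real.log (P x c))) =
          dens x * (-((1 - P x cstar) ^ γ * Real.log (P x cstar))) +
          γ * (dens x * (-∑ c, P x c * Real.log (P x c))) := by ring
      linarith
    · rw [hF, hG, hH, Set.indicator_of_notMem hx, Set.indicator_of_notMem hx,
        Set.indicator_of_notMem hx]
      simp
  -- integrability of H
  have hDint : Integrable (S.indicator dens) := by
    rw [integrable_indicator_iff measurableSet_simplex]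
    exact integrableOn_dirichletDensity α hα
  have hHint : Integrable H := by
    refine Integrable.mono' (hDint.const_mul ((C : ℝ) + 1))
      hHmeas.aestronglyMeasurable (ae_of_all _ fun x => ?_)
    by_cases hx : x ∈ S
    · rw [hH, Set.indicator_of_mem hx, Set.indicator_of_mem hx, Real.norm_eq_abs,
        abs_of_nonneg (mul_nonneg (hdnn x hx) (hent0 x hx))]
      have := mul_le_mul_of_nonneg_left (hent1 x hx) (hdnn x hx)
      linarith
    · rw [hH, Set.indicator_of_notMem hx, Set.indicator_of_notMem hx]
      simp
  -- final case split
  by_cases hGint : Integrable G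
  · have hFint : Integrable F := by
      refine hGint.mono hFmeas.aestronglyMeasurable (ae_of_all _ fun x => ?_)
      rw [Real.norm_eq_abs, Real.norm_eq_abs, abs_of_nonneg (hFnn x), abs_of_nonneg (hGnn x)]
      exact hFG x
    have h1 : (∫ x, G x) ≤ ∫ x, F x + γ * H x :=
      integral_mono hGint (hFint.add (hHint.const_mul γ)) hGFH
    rw [integral_add hFint (hHint.const_mul γ), integral_const_mul γ _] at h1
    linarith
  · rw [integral_undef hGint]
    have h2 : 0 ≤ ∫ x, F x := integral_nonneg hFnn
    have h3 : 0 ≤ ∫ x, H x := integral_nonneg hHnn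
    have h4 : 0 ≤ γ * ∫ x, H x := mul_nonneg (by linarith) h3
    linarith
end

section
/- The trigamma function ψ_1 is strictly decreasing on (0, ∞); hence for α_0 > α_{c*} > 0 (with α_0 = Σ_c α_c and C ≥ 2 categories each with α_c ≥ 1), the UCE gradient ψ_1(α_0) - ψ_1(α_{c*}) is strictly negative, so increasing the ground-truth evidence α_{c*} always strictly decreases the UCE loss ψ(α_0) - ψ(α_{c*}). -/
open Real BigOperators Filter Topology Finset

noncomputable def gg (k : ℕ) (x : ℝ) : ℝ := 1/((k:ℝ)+1) - 1/(x+(k:ℝ)+1)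

noncomputable def psiA (x : ℝ) : ℝ :=
  -Real.eulerMascheroniConstant + (-(1/x) + ∑' k : ℕ, gg k x)

noncomputable def triA (x : ℝ) : ℝ := 1/x^2 + ∑' k : ℕ, 1/(x+(k:ℝ)+1)^2

lemma summable_base : Summable (fun k : ℕ => 1/((k:ℝ)+1)^2) := by
  have h := (summable_nat_add_iff 1).mpr <| Real.summable_one_div_nat_pow.mpr one_lt_two
  exact h.congr (fun k => by push_cast; ring)

lemma summable_invsq {x : ℝ} (hx : 0 < x) : Summable (fun k : ℕ => 1/(x+(k:ℝ)+1)^2) := by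
  refine summable_base.of_nonneg_of_le (fun k => by positivity) (fun k => ?_)
  apply one_div_le_one_div_of_le (by positivity)
  have h : ((k:ℝ)+1) ≤ x + k + 1 := by linarith
  nlinarith [Nat.cast_nonneg (α := ℝ) k]

lemma gg_eq (k : ℕ) {x : ℝ} (hx : 0 < x) :
    gg k x = x / (((k:ℝ)+1) * (x+(k:ℝ)+1)) := by
  have h1 : ((k:ℝ)+1) ≠ 0 := by positivity
  have h2 : (x+(k:ℝ)+1) ≠ 0 := by positivity
  unfold gg
  field_simp
  ring

lemma gg_nonneg (k : ℕ) {x : ℝ} (hx : 0 < x) : 0 ≤ gg k x := by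
  rw [gg_eq k hx]; positivity

lemma gg_le (k : ℕ) {x : ℝ} (hx : 0 < x) : gg k x ≤ x * (1/((k:ℝ)+1)^2) := by
  rw [gg_eq k hx, mul_one_div]
  apply div_le_div_of_nonneg_left hx.le (by positivity)
  nlinarith [Nat.cast_nonneg (α := ℝ) k]

lemma summable_gg {x : ℝ} (hx : 0 < x) : Summable (fun k => gg k x) :=
  (summable_base.mul_left x).of_nonneg_of_le (fun k => gg_nonneg k hx)
    (fun k => gg_le k hx)

lemma tendstoUniformlyOn_of_const {c : ℕ → ℝ} {L : ℝ} {s : Set ℝ}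
    (h : Tendsto c atTop (𝓝 L)) :
    TendstoUniformlyOn (fun n (_ : ℝ) => c n) (fun _ => L) atTop s := by
  rw [Metric.tendstoUniformlyOn_iff]
  intro ε hε
  filter_upwards [Metric.tendsto_nhds.mp h ε hε] with n hn x _
  rw [dist_comm]; exact hn

lemma tendstoUniformlyOn_self (f : ℝ → ℝ) {s : Set ℝ} :
    TendstoUniformlyOn (fun (_ : ℕ) => f) f atTop s := by
  rw [Metric.tendstoUniformlyOn_iff]
  intro ε hε
  filter_upwards with n x _
  simpa using hε

lemma harmonic_cast (n : ℕ) : ((harmonic n : ℚ) : ℝ) = ∑ i ∈ Finset.range n, 1/((i:ℝ)+1) := by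
  unfold harmonic
  push_cast
  simp [one_div]

lemma tendsto_c : Tendsto (fun n : ℕ => Real.log n - ∑ i ∈ Finset.range n, 1/((i:ℝ)+1))
    atTop (𝓝 (-Real.eulerMascheroniConstant)) := by
  apply Tendsto.congr' _ Real.tendsto_eulerMascheroniSeq'.neg
  filter_upwards [eventually_ne_atTop 0] with n hn
  rw [Real.eulerMascheroniSeq', if_neg hn, harmonic_cast]
  ring

lemma fprime_eq (n : ℕ) {y : ℝ} (hy : 0 < y) :
    Real.log n - ∑ m ∈ Finset.range (n+1), 1/(y+(m:ℝ)) =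
      (Real.log n - ∑ i ∈ Finset.range n, 1/((i:ℝ)+1)) + (-(1/y) + ∑ k ∈ Finset.range n, gg k y) := by
  rw [Finset.sum_range_succ' (fun m => 1/(y+(m:ℝ))) n]
  simp only [gg, Finset.sum_sub_distrib]
  push_cast
  rw [Finset.sum_congr rfl (fun x _ => by rw [show y + (x:ℝ) + 1 = 1 + y + x by ring] : ∀ x ∈ Finset.range n, 1/(y+(x:ℝ)+1) = 1/(1+y+(x:ℝ)))]
  simp only [one_div]
  ring

lemma hasDerivAt_logGammaSeq (n : ℕ) {y : ℝ} (hy : 0 < y) :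
    HasDerivAt (fun y => Real.BohrMollerup.logGammaSeq y n)
      (Real.log n - ∑ m ∈ Finset.range (n+1), 1/(y+(m:ℝ))) y := by
  unfold Real.BohrMollerup.logGammaSeq
  have h1 : HasDerivAt (fun y : ℝ => y * Real.log n + Real.log (Nat.factorial n))
      (Real.log n) y := by
    simpa using ((hasDerivAt_id y).mul_const (Real.log n)).add_const (Real.log (Nat.factorial n))
  have h2 : HasDerivAt (fun y : ℝ => ∑ m ∈ Finset.range (n+1), Real.log (y + m))
      (∑ m ∈ Finset.range (n+1), 1/(y+(m:ℝ))) y := by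
    apply HasDerivAt.fun_sum
    intro m _
    have hne : y + (m:ℝ) ≠ 0 := by positivity
    simpa [one_div] using (((hasDerivAt_id y).add_const (m:ℝ)).log hne)
  have := h1.sub h2
  exact this

lemma hasDerivAt_logGamma {x : ℝ} (hx : 0 < x) :
    HasDerivAt (fun y => Real.log (Real.Gamma y)) (psiA x) x := by
  set s : Set ℝ := Set.Ioo (x/2) (x+1) with hs
  have hsub : s ⊆ Set.Ioi (0:ℝ) := fun y hy => lt_trans (by linarith) hy.1
  have hxs : x ∈ s := ⟨by linarith, by linarith⟩
  apply hasDerivAt_of_tendstoUniformlyOn (l := atTop) (f := fun n y => Real.BohrMollerup.logGammaSeq y n)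
    (f' := fun (n : ℕ) (y : ℝ) => Real.log n - ∑ m ∈ Finset.range (n+1), 1/(y+(m:ℝ)))
    isOpen_Ioo ?_ ?_ ?_ hxs
  · -- uniform convergence of derivatives to psiA
    have h1 : TendstoUniformlyOn
        (fun (n : ℕ) (_ : ℝ) => Real.log n - ∑ i ∈ Finset.range n, 1/((i:ℝ)+1))
        (fun _ => -Real.eulerMascheroniConstant) atTop s := tendstoUniformlyOn_of_const tendsto_c
    have h2 : TendstoUniformlyOn (fun (_ : ℕ) (y : ℝ) => -(1/y)) (fun y => -(1/y)) atTop s :=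
      tendstoUniformlyOn_self _
    have h3 : TendstoUniformlyOn (fun N y => ∑ k ∈ Finset.range N, gg k y)
        (fun y => ∑' k, gg k y) atTop s := by
      apply tendstoUniformlyOn_tsum_nat ((summable_base).mul_left (x+1))
      intro k y hy
      have hy0 : 0 < y := hsub hy
      rw [Real.norm_eq_abs, abs_of_nonneg (gg_nonneg k hy0)]
      calc gg k y ≤ y * (1/((k:ℝ)+1)^2) := gg_le k hy0
        _ ≤ (x+1) * (1/((k:ℝ)+1)^2) := by
            apply mul_le_mul_of_nonneg_right (le_of_lt hy.2) (by positivity)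
    have := h1.add (h2.add h3)
    apply this.congr
    filter_upwards with n y hy
    exact (fprime_eq n (hsub hy)).symm
  · filter_upwards with n y hy
    exact hasDerivAt_logGammaSeq n (hsub hy)
  · intro y hy
    exact Real.BohrMollerup.tendsto_log_gamma (hsub hy)

lemma hasDerivAt_gg (k : ℕ) {y : ℝ} (hy : 0 < y) :
    HasDerivAt (fun y => gg k y) (1/(y+(k:ℝ)+1)^2) y := by
  unfold gg
  have hne : y + (k:ℝ) + 1 ≠ 0 := by positivity
  have h : HasDerivAt (fun y : ℝ => (y + ((k:ℝ)+1))⁻¹) (-((y + ((k:ℝ)+1))^2)⁻¹) y := by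
    have := (hasDerivAt_inv (x := y + ((k:ℝ)+1)) (by positivity)).comp y
      ((hasDerivAt_id y).add_const ((k:ℝ)+1))
    simpa [Function.comp_def] using this
  have h2 := h.const_sub (1/((k:ℝ)+1))
  simpa only [one_div, ← add_assoc, neg_neg] using h2

lemma hasDerivAt_T1 {x : ℝ} (hx : 0 < x) :
    HasDerivAt (fun y => ∑' k, gg k y) (∑' k : ℕ, 1/(x+(k:ℝ)+1)^2) x := by
  apply hasDerivAt_of_tendstoUniformlyOn (l := atTop)
    (f := fun (n : ℕ) (y : ℝ) => ∑ k ∈ Finset.range n, gg k y)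
    (f' := fun (n : ℕ) (y : ℝ) => ∑ k ∈ Finset.range n, 1/(y+(k:ℝ)+1)^2)
    isOpen_Ioi ?_ ?_ ?_ (Set.mem_Ioi.mpr hx)
  · apply tendstoUniformlyOn_tsum_nat summable_base
    intro k y hy
    have hy0 : (0:ℝ) < y := hy
    rw [Real.norm_eq_abs, abs_of_nonneg (by positivity)]
    apply one_div_le_one_div_of_le (by positivity)
    nlinarith [Nat.cast_nonneg (α := ℝ) k]
  · filter_upwards with n y hy
    exact HasDerivAt.fun_sum (fun k _ => hasDerivAt_gg k hy)
  · intro y hy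
    exact (summable_gg hy).hasSum.tendsto_sum_nat

lemma hasDerivAt_psiA {x : ℝ} (hx : 0 < x) : HasDerivAt psiA (triA x) x := by
  have h1 : HasDerivAt (fun y : ℝ => -(1/y)) (1/x^2) x := by
    have := (hasDerivAt_inv hx.ne').neg
    simpa [one_div, Pi.neg_def] using this
  have := (h1.add (hasDerivAt_T1 hx)).const_add (-Real.eulerMascheroniConstant)
  unfold psiA triA
  exact this

lemma digamma_eq {x : ℝ} (hx : 0 < x) : digamma x = psiA x :=
  (hasDerivAt_logGamma hx).deriv

lemma hasDerivAt_digamma {x : ℝ} (hx : 0 < x) : HasDerivAt digamma (triA x) x := by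
  apply (hasDerivAt_psiA hx).congr_of_eventuallyEq
  filter_upwards [isOpen_Ioi.mem_nhds (Set.mem_Ioi.mpr hx)] with y hy
  exact digamma_eq hy

lemma trigamma_eq {x : ℝ} (hx : 0 < x) : trigamma x = triA x :=
  (hasDerivAt_digamma hx).deriv

lemma triA_strictAnti : StrictAntiOn triA (Set.Ioi (0:ℝ)) := by
  intro a ha b hb hab
  have ha0 : (0:ℝ) < a := ha
  have hb0 : (0:ℝ) < b := hb
  unfold triA
  have h1 : 1/b^2 < 1/a^2 := by
    apply one_div_lt_one_div_of_lt (by positivity)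
    nlinarith
  have h2 : ∑' k : ℕ, 1/(b+(k:ℝ)+1)^2 ≤ ∑' k : ℕ, 1/(a+(k:ℝ)+1)^2 := by
    apply Summable.tsum_le_tsum _ (summable_invsq hb0) (summable_invsq ha0)
    intro k
    apply one_div_le_one_div_of_le (by positivity)
    nlinarith [Nat.cast_nonneg (α := ℝ) k]
  linarith

lemma trigamma_strictAnti : StrictAntiOn trigamma (Set.Ioi (0:ℝ)) := by
  intro a ha b hb hab
  rw [trigamma_eq (Set.mem_Ioi.mp ha), trigamma_eq (Set.mem_Ioi.mp hb)]
  exact triA_strictAnti ha hb hab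

/-- The trigamma function is strictly decreasing on `(0, ∞)`; hence for `α₀ > α_{c*} > 0`
(with `α₀ = ∑ c, α_c`, at least two categories, each `α_c ≥ 1`), the UCE gradient
`ψ₁(α₀) - ψ₁(α_{c*})` is strictly negative, so increasing the ground-truth evidence
`α_{c*}` strictly decreases the UCE loss `ψ(α₀) - ψ(α_{c*})`. -/
theorem trigamma_strictAnti_and_UCE_strictly_decreasing :
    StrictAntiOn trigamma (Set.Ioi (0 : ℝ)) ∧
    ∀ (C : ℕ) (α : Fin C → ℝ) (cstar : Fin C),
      2 ≤ C → (∀ c, 1 ≤ α c) → 0 < α cstar → α cstar < ∑ c, α c →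
      trigamma (∑ c, α c) - trigamma (α cstar) < 0 ∧
        StrictAntiOn (fun t => digamma (∑ c, Function.update α cstar t c) - digamma t)
          (Set.Ioi (0 : ℝ)) := by
  refine ⟨trigamma_strictAnti, ?_⟩
  intro C α cstar _ _ hpos hlt
  have hS0 : 0 < ∑ c, α c := lt_trans hpos hlt
  constructor
  · have := trigamma_strictAnti (Set.mem_Ioi.mpr hpos) (Set.mem_Ioi.mpr hS0) hlt
    linarith
  · set B : ℝ := (∑ c, α c) - α cstar with hB
    have hB0 : 0 < B := sub_pos.mpr hlt
    have hsum : ∀ t : ℝ, ∑ c, Function.update α cstar t c = t + B := by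
      intro t
      rw [Finset.sum_update_of_mem (Finset.mem_univ cstar)]
      congr 1
      rw [Finset.sum_sdiff_eq_sub (Finset.singleton_subset_iff.mpr (Finset.mem_univ cstar)),
        Finset.sum_singleton]
    have hfun : (fun t => digamma (∑ c, Function.update α cstar t c) - digamma t)
        = fun t => digamma (t + B) - digamma t := by
      funext t; rw [hsum t]
    rw [hfun]
    have hderiv : ∀ t ∈ Set.Ioi (0:ℝ), HasDerivAt (fun t => digamma (t + B) - digamma t)
        (triA (t + B) - triA t) t := by
      intro t ht
      have ht0 : (0:ℝ) < t := ht
      have h1 : HasDerivAt (fun t : ℝ => digamma (t + B)) (triA (t + B)) t := by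
        have := (hasDerivAt_digamma (show (0:ℝ) < t + B by linarith)).comp t
          ((hasDerivAt_id t).add_const B)
        simpa [Function.comp_def] using this
      exact h1.sub (hasDerivAt_digamma ht0)
    apply strictAntiOn_of_deriv_neg (convex_Ioi 0)
    · intro t ht
      exact (hderiv t ht).continuousAt.continuousWithinAt
    · intro t ht
      rw [interior_Ioi] at ht
      rw [(hderiv t ht).deriv]
      have ht0 : (0:ℝ) < t := ht
      have := triA_strictAnti (Set.mem_Ioi.mpr ht0)
        (Set.mem_Ioi.mpr (show (0:ℝ) < t + B by linarith)) (by linarith)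
      linarith
end
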